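/- Let k ≥ 1 be a natural number (or real k ≥ 1), ρ ≥ 0, and 0 ≤ a ≤ b. Then ((ρ² + b²)^(k/2) - (ρ² + a²)^(k/2)) · (b² / (ρ² + b²))^(k/2 - 1) ≤ (k/2) · (b^k - a^k). -/
import Mathlib

open Real

lemma mvt_key {p x y : ℝ} (hp : 1 ≤ p) (hy : 0 ≤ y) (hxy : y ≤ x) :
    x ^ p - y ^ p ≤ p * x ^ (p - 1) * (x - y) := by
  rcases eq_or_lt_of_le (hy.trans hxy) with h | hx
  · have hy0 : y = 0 := le_antisymm (h ▸ hxy) hy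
    subst hy0
    rw [← h]
    simp
  · have hs : -1 ≤ y / x - 1 := by
      have : 0 ≤ y / x := div_nonneg hy hx.le
      linarith
    have B := one_add_mul_self_le_rpow_one_add hs hp
    rw [add_sub_cancel, Real.div_rpow hy hx.le] at B
    have hxp : 0 < x ^ p := Real.rpow_pos_of_pos hx p
    have h1 : (1 + p * (y / x - 1)) * x ^ p ≤ y ^ p := by
      calc (1 + p * (y / x - 1)) * x ^ p ≤ (y ^ p / x ^ p) * x ^ p :=
            mul_le_mul_of_nonneg_right B hxp.le
        _ = y ^ p := div_mul_cancel₀ _ hxp.ne'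
    have h2 : x ^ (p - 1) = x ^ p / x := Real.rpow_sub_one hx.ne' p
    rw [h2]
    have hexp : (1 + p * (y / x - 1)) * x ^ p = x ^ p - p * (x ^ p / x) * (x - y) := by
      field_simp
      ring
    rw [hexp] at h1
    linarith

theorem stmt_10 (k : ℕ) (hk : 2 ≤ k) (ρ a b : ℝ) (hρ : 0 ≤ ρ) (ha : 0 ≤ a)
    (hab : a ≤ b) :
    ((ρ ^ 2 + b ^ 2) ^ ((k : ℝ) / 2) - (ρ ^ 2 + a ^ 2) ^ ((k : ℝ) / 2)) *
        (b ^ 2 / (ρ ^ 2 + b ^ 2)) ^ ((k : ℝ) / 2 - 1) ≤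
      ((k : ℝ) / 2) * (b ^ k - a ^ k) := by
  set p : ℝ := (k : ℝ) / 2 with hpdef
  have hp : 1 ≤ p := by
    have : (2 : ℝ) ≤ (k : ℝ) := by exact_mod_cast hk
    rw [hpdef]; linarith
  have hb : 0 ≤ b := ha.trans hab
  rcases eq_or_lt_of_le hb with hb0 | hb0
  · have ha0 : a = 0 := le_antisymm (hb0 ▸ hab) ha
    subst ha0
    rw [← hb0]
    simp
  · have hX : 0 < ρ ^ 2 + b ^ 2 := by positivity
    have hY : 0 ≤ ρ ^ 2 + a ^ 2 := by positivity
    have hYX : ρ ^ 2 + a ^ 2 ≤ ρ ^ 2 + b ^ 2 := by nlinarith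
    have key := mvt_key hp hY hYX
    have hfac : (0:ℝ) ≤ (b ^ 2 / (ρ ^ 2 + b ^ 2)) ^ (p - 1) := by positivity
    have step1 : ((ρ ^ 2 + b ^ 2) ^ p - (ρ ^ 2 + a ^ 2) ^ p) *
        (b ^ 2 / (ρ ^ 2 + b ^ 2)) ^ (p - 1) ≤
        p * (ρ ^ 2 + b ^ 2) ^ (p - 1) * ((ρ ^ 2 + b ^ 2) - (ρ ^ 2 + a ^ 2)) *
        (b ^ 2 / (ρ ^ 2 + b ^ 2)) ^ (p - 1) :=
      mul_le_mul_of_nonneg_right key hfac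
    have hcomb : (ρ ^ 2 + b ^ 2) ^ (p - 1) * (b ^ 2 / (ρ ^ 2 + b ^ 2)) ^ (p - 1)
        = (b ^ 2) ^ (p - 1) := by
      rw [← Real.mul_rpow hX.le (by positivity)]
      rw [mul_div_cancel₀ _ hX.ne']
    have hnat : ((k - 2 : ℕ) : ℝ) = 2 * (p - 1) := by
      rw [Nat.cast_sub hk, hpdef]; push_cast; ring
    have hbp : (b ^ 2) ^ (p - 1) = b ^ (k - 2 : ℕ) := by
      have hb2 : (b ^ 2 : ℝ) = b ^ (2:ℝ) := by
        rw [← Real.rpow_natCast b 2]; norm_num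
      rw [hb2, ← Real.rpow_mul hb, ← hnat, Real.rpow_natCast]
    have step2 : p * (ρ ^ 2 + b ^ 2) ^ (p - 1) * ((ρ ^ 2 + b ^ 2) - (ρ ^ 2 + a ^ 2)) *
        (b ^ 2 / (ρ ^ 2 + b ^ 2)) ^ (p - 1) = p * (b ^ 2 - a ^ 2) * b ^ (k - 2 : ℕ) := by
      rw [← hbp, ← hcomb]; ring
    rw [step2] at step1
    refine step1.trans ?_
    have hpowle : a ^ (k - 2) ≤ b ^ (k - 2) := pow_le_pow_left₀ ha hab _
    have hbk : b ^ k = b ^ 2 * b ^ (k - 2) := by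
      rw [← pow_add]; congr 1; omega
    have hak : a ^ k = a ^ 2 * a ^ (k - 2) := by
      rw [← pow_add]; congr 1; omega
    rw [hbk, hak]
    have hp0 : 0 < p := lt_of_lt_of_le one_pos hp
    nlinarith [sq_nonneg a, mul_le_mul_of_nonneg_left hpowle (sq_nonneg a),
      mul_le_mul_of_nonneg_left (mul_le_mul_of_nonneg_left hpowle (sq_nonneg a)) hp0.le]
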